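/- Let x₁ < x₂ < ⋯ < xₙ be real numbers, Ω* the dual of a norm on ℝ^k, and α₁,…,αₙ ∈ ℝ^k. If Ω*(Σᵢ αᵢ·max(xᵢ − xⱼ, 0)) ≤ 1 for all j ∈ {1,…,n}, then Ω*(Σᵢ αᵢ·max(xᵢ − c, 0)) ≤ 1 for all c ∈ [x₁, xₙ]. -/

import Mathlib

noncomputable def dualNorm (k : ℕ) (Ω : (Fin k → ℝ) → ℝ) (g : Fin k → ℝ) : ℝ :=
  sSup {t : ℝ | ∃ w : Fin k → ℝ, Ω w = 1 ∧ t = ∑ j, g j * w j}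

lemma omega_lower (k : ℕ) (Ω : (Fin k → ℝ) → ℝ)
    (hΩ_add : ∀ v w, Ω (v + w) ≤ Ω v + Ω w)
    (hΩ_smul : ∀ (c : ℝ) (v : Fin k → ℝ), Ω (c • v) = |c| * Ω v)
    (hΩ_pos : ∀ v, v ≠ 0 → 0 < Ω v) :
    ∃ m > 0, ∀ w : Fin k → ℝ, m * ‖w‖ ≤ Ω w := by
  have hΩ0 : Ω 0 = 0 := by
    have := hΩ_smul 0 0
    simpa using this
  rcases Nat.eq_zero_or_pos k with hk | hk
  · refine ⟨1, one_pos, fun w => ?_⟩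
    subst hk
    have hw : w = 0 := Subsingleton.elim _ _
    rw [hw, hΩ0, norm_zero, mul_zero]
  -- upper bound: Ω w ≤ C * ‖w‖
  set e : Fin k → (Fin k → ℝ) := fun j => Pi.single j 1 with he
  have hub : ∃ C : ℝ, ∀ w : Fin k → ℝ, Ω w ≤ C * ‖w‖ := by
    refine ⟨∑ j : Fin k, Ω (e j), fun w => ?_⟩
    have hrep : w = ∑ j : Fin k, w j • e j := by
      ext i
      simp [he, Pi.single_apply, mul_comm]
    calc Ω w = Ω (∑ j : Fin k, w j • e j) := by rw [← hrep]
      _ ≤ ∑ j : Fin k, Ω (w j • e j) := by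
          classical
          refine Finset.le_sum_of_subadditive Ω hΩ0.le hΩ_add _ _
      _ = ∑ j : Fin k, |w j| * Ω (e j) := by
          simp [hΩ_smul]
      _ ≤ ∑ j : Fin k, ‖w‖ * Ω (e j) := by
          refine Finset.sum_le_sum fun j _ => ?_
          have h1 : |w j| ≤ ‖w‖ := by
            simpa [Real.norm_eq_abs] using norm_le_pi_norm w j
          have h2 : 0 ≤ Ω (e j) := by
            refine (hΩ_pos _ ?_).le
            intro hz
            have := congrFun hz j
            simp [he] at this
          exact mul_le_mul_of_nonneg_right h1 h2
      _ = (∑ j : Fin k, Ω (e j)) * ‖w‖ := by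
          rw [← Finset.mul_sum, mul_comm]
  obtain ⟨C, hC⟩ := hub
  -- continuity of Ω
  have hΩneg : ∀ v, Ω (-v) = Ω v := by
    intro v
    have := hΩ_smul (-1) v
    simpa using this
  have hcont : Continuous Ω := by
    have hC0 : 0 ≤ C := by
      have h1 := hC (e ⟨0, hk⟩)
      have hpos := hΩ_pos (e ⟨0, hk⟩) (by
        intro hz
        have := congrFun hz ⟨0, hk⟩
        simp [he] at this)
      nlinarith [norm_nonneg (e ⟨0, hk⟩)]
    refine (LipschitzWith.of_dist_le_mul (K := ⟨C, hC0⟩) (f := Ω) fun a b => ?_).continuous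
    have h1 : Ω a - Ω b ≤ Ω (a - b) := by
      have := hΩ_add (a - b) b
      simp at this
      linarith
    have h2 : Ω b - Ω a ≤ Ω (a - b) := by
      have := hΩ_add (b - a) a
      simp at this
      have h3 : Ω (b - a) = Ω (a - b) := by
        rw [← hΩneg (a - b), neg_sub]
      linarith
    have hd : dist (Ω a) (Ω b) ≤ Ω (a - b) := by
      rw [Real.dist_eq, abs_sub_le_iff]
      exact ⟨h1, h2⟩
    calc dist (Ω a) (Ω b) ≤ Ω (a - b) := hd
      _ ≤ C * ‖a - b‖ := hC _
      _ = (⟨C, hC0⟩ : NNReal) * dist a b := by rw [dist_eq_norm]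
  -- min on sphere
  haveI : Nontrivial (Fin k → ℝ) := by
    refine ⟨e ⟨0, hk⟩, 0, ?_⟩
    intro hz
    have := congrFun hz ⟨0, hk⟩
    simp [he] at this
  have hsne : (Metric.sphere (0 : Fin k → ℝ) 1).Nonempty :=
    NormedSpace.sphere_nonempty.mpr zero_le_one
  obtain ⟨w0, hw0, hmin'⟩ :=
    (isCompact_sphere (0 : Fin k → ℝ) 1).exists_isMinOn hsne hcont.continuousOn
  have hmin : ∀ y ∈ Metric.sphere (0 : Fin k → ℝ) 1, Ω w0 ≤ Ω y := fun y hy => hmin' hy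
  have hw0n : ‖w0‖ = 1 := by simpa using hw0
  have hw0ne : w0 ≠ 0 := by
    intro hz; rw [hz] at hw0n; simp at hw0n
  refine ⟨Ω w0, hΩ_pos _ hw0ne, fun w => ?_⟩
  rcases eq_or_ne w 0 with rfl | hw
  · simp [hΩ0]
  · have hwn : ‖w‖ ≠ 0 := norm_ne_zero_iff.mpr hw
    have hmem : (‖w‖⁻¹ • w) ∈ Metric.sphere (0 : Fin k → ℝ) 1 := by
      simp [norm_smul, abs_of_nonneg (norm_nonneg w), inv_mul_cancel₀ hwn]
    have := hmin _ hmem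
    rw [hΩ_smul] at this
    rw [abs_of_nonneg (by positivity)] at this
    have hwpos : (0:ℝ) < ‖w‖ := lt_of_le_of_ne (norm_nonneg w) (Ne.symm hwn)
    calc Ω w0 * ‖w‖ ≤ (‖w‖⁻¹ * Ω w) * ‖w‖ :=
          mul_le_mul_of_nonneg_right this hwpos.le
      _ = Ω w := by field_simp

theorem stmt4 (n k : ℕ) (hn : 2 ≤ n) (x : Fin n → ℝ) (hx : StrictMono x)
    (Ω : (Fin k → ℝ) → ℝ)
    (hΩ_add : ∀ v w, Ω (v + w) ≤ Ω v + Ω w)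
    (hΩ_smul : ∀ (c : ℝ) (v : Fin k → ℝ), Ω (c • v) = |c| * Ω v)
    (hΩ_pos : ∀ v, v ≠ 0 → 0 < Ω v)
    (α : Fin n → Fin k → ℝ)
    (h : ∀ j : Fin n, dualNorm k Ω (∑ i, max (x i - x j) 0 • α i) ≤ 1) :
    ∀ c ∈ Set.Icc (x ⟨0, by omega⟩) (x ⟨n - 1, by omega⟩),
      dualNorm k Ω (∑ i, max (x i - c) 0 • α i) ≤ 1 := by
  obtain ⟨m, hm, hml⟩ := omega_lower k Ω hΩ_add hΩ_smul hΩ_pos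
  have hbdd : ∀ g : Fin k → ℝ,
      BddAbove {t : ℝ | ∃ w : Fin k → ℝ, Ω w = 1 ∧ t = ∑ j, g j * w j} := by
    intro g
    refine ⟨(∑ j, |g j|) / m, fun t ht => ?_⟩
    obtain ⟨w, hw, rfl⟩ := ht
    have hwle : ‖w‖ ≤ 1 / m := by
      have := hml w
      rw [hw] at this
      rw [div_eq_inv_mul, le_inv_mul_iff₀ hm]
      linarith [this]
    calc ∑ j, g j * w j ≤ ∑ j, |g j| * (1/m) := by
          refine Finset.sum_le_sum fun j _ => ?_
          calc g j * w j ≤ |g j * w j| := le_abs_self _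
            _ = |g j| * |w j| := abs_mul _ _
            _ ≤ |g j| * (1/m) := by
                refine mul_le_mul_of_nonneg_left ?_ (abs_nonneg _)
                calc |w j| ≤ ‖w‖ := by
                      simpa [Real.norm_eq_abs] using norm_le_pi_norm w j
                  _ ≤ 1/m := hwle
      _ = (∑ j, |g j|) / m := by rw [← Finset.sum_mul]; ring
  have hmem : ∀ (g : Fin k → ℝ) (w : Fin k → ℝ), Ω w = 1 →
      (∑ j, g j * w j) ≤ dualNorm k Ω g := by
    intro g w hw
    exact le_csSup (hbdd g) ⟨w, hw, rfl⟩
  intro c hc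
  -- find p with x p ≤ c ≤ x (p+1)
  classical
  set P : ℕ → Prop := fun q => x ⟨min q (n-1), by omega⟩ ≤ c with hP
  have hP0 : P 0 := by
    have : (⟨min 0 (n-1), by omega⟩ : Fin n) = ⟨0, by omega⟩ := by
      ext; simp
    rw [hP]; simp only []; rw [this]; exact hc.1
  set p : ℕ := Nat.findGreatest P (n-2) with hpdef
  have hple : p ≤ n - 2 := Nat.findGreatest_le _
  have hPp : P p := Nat.findGreatest_spec (Nat.zero_le _) hP0
  have hpn : p < n := by omega
  have hp1n : p + 1 < n := by omega
  have hac : x ⟨p, hpn⟩ ≤ c := by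
    have : (⟨min p (n-1), by omega⟩ : Fin n) = ⟨p, hpn⟩ := by
      ext; simp; omega
    rw [hP] at hPp; rwa [this] at hPp
  have hcb : c ≤ x ⟨p + 1, hp1n⟩ := by
    rcases lt_or_eq_of_le hple with hlt | heq
    · have hng : ¬ P (p + 1) :=
        Nat.findGreatest_is_greatest (Nat.lt_succ_self p) (by omega)
      rw [hP] at hng
      simp only [] at hng
      have heq2 : (⟨min (p+1) (n-1), by omega⟩ : Fin n) = ⟨p+1, hp1n⟩ := by
        ext; simp; omega
      rw [heq2] at hng
      exact (not_le.mp hng).le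
    · have : (⟨p + 1, hp1n⟩ : Fin n) = ⟨n - 1, by omega⟩ := by
        ext; simp; omega
      rw [this]; exact hc.2
  set a : ℝ := x ⟨p, hpn⟩ with ha
  set b : ℝ := x ⟨p + 1, hp1n⟩ with hb
  have hab : a < b := hx (by simp [Fin.lt_def])
  set lam : ℝ := (b - c) / (b - a) with hlam
  set mu : ℝ := (c - a) / (b - a) with hmu
  have hba : b - a ≠ 0 := by linarith
  have hlam0 : 0 ≤ lam := div_nonneg (by linarith) (by linarith)
  have hmu0 : 0 ≤ mu := div_nonneg (by linarith) (by linarith)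
  have hlm : lam + mu = 1 := by
    rw [hlam, hmu]; field_simp; ring
  -- pointwise convexity identity
  have hpt : ∀ i : Fin n,
      max (x i - c) 0 = lam * max (x i - a) 0 + mu * max (x i - b) 0 := by
    intro i
    rcases le_or_gt (i : ℕ) p with hip | hip
    · have h1 : x i ≤ a := hx.monotone (by simpa [Fin.le_def] using hip)
      have e1 : max (x i - c) 0 = 0 := max_eq_right (by linarith)
      have e2 : max (x i - a) 0 = 0 := max_eq_right (by linarith)
      have e3 : max (x i - b) 0 = 0 := max_eq_right (by linarith)
      rw [e1, e2, e3]; ring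
    · have h1 : b ≤ x i := hx.monotone (by simpa [Fin.le_def] using hip)
      have e1 : max (x i - c) 0 = x i - c := max_eq_left (by linarith)
      have e2 : max (x i - a) 0 = x i - a := max_eq_left (by linarith)
      have e3 : max (x i - b) 0 = x i - b := max_eq_left (by linarith)
      rw [e1, e2, e3, hlam, hmu]
      field_simp
      ring
  -- vector identity
  have hvec : (∑ i, max (x i - c) 0 • α i)
      = lam • (∑ i, max (x i - a) 0 • α i) + mu • (∑ i, max (x i - b) 0 • α i) := by
    rw [Finset.smul_sum, Finset.smul_sum, ← Finset.sum_add_distrib]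
    refine Finset.sum_congr rfl fun i _ => ?_
    rw [hpt i, add_smul, smul_smul, smul_smul]
  have hA : dualNorm k Ω (∑ i, max (x i - a) 0 • α i) ≤ 1 := h ⟨p, hpn⟩
  have hB : dualNorm k Ω (∑ i, max (x i - b) 0 • α i) ≤ 1 := h ⟨p + 1, hp1n⟩
  rw [hvec]
  unfold dualNorm
  refine Real.sSup_le (fun t ht => ?_) zero_le_one
  obtain ⟨w, hw, rfl⟩ := ht
  have key : ∑ j, (lam • (∑ i, max (x i - a) 0 • α i)
        + mu • (∑ i, max (x i - b) 0 • α i)) j * w j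
      = lam * (∑ j, (∑ i, max (x i - a) 0 • α i) j * w j)
        + mu * (∑ j, (∑ i, max (x i - b) 0 • α i) j * w j) := by
    rw [Finset.mul_sum, Finset.mul_sum, ← Finset.sum_add_distrib]
    refine Finset.sum_congr rfl fun j _ => ?_
    simp [Pi.add_apply, Pi.smul_apply, smul_eq_mul]
    ring
  rw [key]
  have hA' := hmem (∑ i, max (x i - a) 0 • α i) w hw
  have hB' := hmem (∑ i, max (x i - b) 0 • α i) w hw
  calc lam * (∑ j, (∑ i, max (x i - a) 0 • α i) j * w j)
        + mu * (∑ j, (∑ i, max (x i - b) 0 • α i) j * w j)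
      ≤ lam * 1 + mu * 1 := by
        have := mul_le_mul_of_nonneg_left (hA'.trans hA) hlam0
        have := mul_le_mul_of_nonneg_left (hB'.trans hB) hmu0
        nlinarith [mul_le_mul_of_nonneg_left (hA'.trans hA) hlam0,
          mul_le_mul_of_nonneg_left (hB'.trans hB) hmu0]
    _ = 1 := by rw [mul_one, mul_one, hlm]
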